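/- For nonnegative integers $M, N$ and real parameter $p$ with $0<p<1$, and for every polynomial-valued Krawtchouk polynomial $\check{P}_n(x;N,p) = {}_2F_1(-n,-x;-N;p^{-1})$ with $0 \le n \le N$, the identity $\sum_{j=0}^M (-1)^j \binom{M}{j} (x+1+j)_{M-j} (x-N)_j\, \check{P}_n(x+j;N,p) = (N+1)_M\, \check{P}_n(x+M; N+M, p)$ holds as an identity of rational functions (polynomials) in $x$. -/

import Mathlib

/-- Rising Pochhammer symbol `(a)_j`. -/
noncomputable def poch (a : ℝ) (j : ℕ) : ℝ := ∏ i ∈ Finset.range j, (a + i)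

/-- Krawtchouk polynomial `P_n(x;N,p) = ₂F₁(-n,-x;-N;p⁻¹)`, normalised by `P_n(0)=1`. -/
noncomputable def kraw (N : ℕ) (p : ℝ) (n : ℕ) (x : ℝ) : ℝ :=
  ∑ k ∈ Finset.range (n + 1),
    poch (-(n : ℝ)) k * poch (-x) k / (poch (-(N : ℝ)) k * (Nat.factorial k)) * p⁻¹ ^ k

lemma poch_zero (a : ℝ) : poch a 0 = 1 := by simp [poch]

lemma poch_succ (a : ℝ) (k : ℕ) : poch a (k+1) = poch a k * (a + k) :=
  Finset.prod_range_succ _ _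

lemma poch_succ' (a : ℝ) (k : ℕ) : poch a (k+1) = a * poch (a+1) k := by
  unfold poch
  rw [Finset.prod_range_succ']
  simp only [Nat.cast_zero, add_zero, Nat.cast_add, Nat.cast_one]
  rw [mul_comm]
  congr 1
  exact Finset.prod_congr rfl fun i _ => by ring

lemma lemA (x : ℝ) (k : ℕ) : (x+1) * poch (-x) k = (x+1-k) * poch (-x-1) k := by
  have h1 : poch (-x-1) (k+1) = (-x-1) * poch (-x) k := by
    rw [poch_succ']
    rw [show -x - 1 + 1 = -x from by ring]
  have h2 : poch (-x-1) (k+1) = poch (-x-1) k * (-x-1+k) := poch_succ _ _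
  linear_combination h1 - h2

lemma poch_neg_ne_zero (N k : ℕ) (h : k ≤ N) : poch (-(N:ℝ)) k ≠ 0 := by
  apply Finset.prod_ne_zero_iff.mpr
  intro i hi
  have hi' : i < N := lt_of_lt_of_le (Finset.mem_range.mp hi) h
  have : (i : ℝ) < N := by exact_mod_cast hi'
  intro hcon; linarith

lemma poch_neg_ne_zero' (N k : ℕ) (h : k ≤ N) : poch (-(N:ℝ)-1) k ≠ 0 := by
  apply Finset.prod_ne_zero_iff.mpr
  intro i hi
  have hi' : i < N := lt_of_lt_of_le (Finset.mem_range.mp hi) h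
  have : (i : ℝ) < N := by exact_mod_cast hi'
  intro hcon; linarith

lemma onestep (N n : ℕ) (p : ℝ) (hp : p ≠ 0) (hn : n ≤ N) (x : ℝ) :
    ((N:ℝ)+1) * kraw (N+1) p n (x+1) =
      (x+1) * kraw N p n x - (x - N) * kraw N p n (x+1) := by
  unfold kraw
  rw [Finset.mul_sum, Finset.mul_sum, Finset.mul_sum, ← Finset.sum_sub_distrib]
  refine Finset.sum_congr rfl fun k hk => ?_
  have hk' : k ≤ N := le_trans (Nat.lt_succ_iff.mp (Finset.mem_range.mp hk)) hn
  have hD : poch (-(N:ℝ)) k ≠ 0 := poch_neg_ne_zero N k hk'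
  have hD' : poch (-(N:ℝ)-1) k ≠ 0 := poch_neg_ne_zero' N k hk'
  have hF : (Nat.factorial k : ℝ) ≠ 0 := Nat.cast_ne_zero.mpr (Nat.factorial_ne_zero k)
  have hA := lemA x k
  have hNN := lemA (N:ℝ) k
  rw [show -(x+1) = -x-1 from by ring,
      show -(((N:ℕ)+1 : ℕ):ℝ) = -(N:ℝ)-1 from by push_cast; ring]
  field_simp
  linear_combination (-(poch (-(n:ℝ)) k * poch (-(N:ℝ)-1) k)) * hA
    + (poch (-(n:ℝ)) k * poch (-x-1) k) * hNN

lemma step_j (N n : ℕ) (p : ℝ) (hp : p ≠ 0) (hn : n ≤ N) (m : ℕ) (y : ℝ) :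
    ((N:ℝ)+1) * (poch (y+2) m * kraw (N+1) p n (y+1)) =
      poch (y+1) (m+1) * kraw N p n y - poch (y+2) m * (y - N) * kraw N p n (y+1) := by
  have hk := onestep N n p hp hn y
  have pA : poch (y+1) (m+1) = (y+1) * poch (y+2) m := by
    rw [poch_succ', show y+1+1 = y+2 from by ring]
  calc ((N:ℝ)+1) * (poch (y+2) m * kraw (N+1) p n (y+1))
      = poch (y+2) m * (((N:ℝ)+1) * kraw (N+1) p n (y+1)) := by ring
    _ = poch (y+2) m * ((y+1) * kraw N p n y - (y - N) * kraw N p n (y+1)) := by rw [hk]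
    _ = poch (y+1) (m+1) * kraw N p n y - poch (y+2) m * (y - N) * kraw N p n (y+1) := by
        rw [pA]; ring

theorem krawtchouk_shape_invariance (M N n : ℕ) (p : ℝ) (hp : 0 < p) (hp1 : p < 1)
    (hn : n ≤ N) (x : ℝ) :
    (∑ j ∈ Finset.range (M + 1),
        (-1) ^ j * (M.choose j : ℝ) * poch (x + 1 + j) (M - j) * poch (x - N) j *
          kraw N p n (x + j)) =
      poch ((N : ℝ) + 1) M * kraw (N + M) p n (x + M) := by
  have hp0 : p ≠ 0 := ne_of_gt hp
  clear hp hp1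
  induction M generalizing N x with
  | zero => simp [poch_zero]
  | succ M ih =>
    -- T and U
    set T : ℕ → ℝ := fun j => (-1)^j * (M.choose j : ℝ) * poch (x+1+j) (M+1-j) *
        poch (x-N) j * kraw N p n (x+j) with hT
    set U : ℕ → ℝ := fun j => (-1)^j * (M.choose j : ℝ) * poch (x+2+j) (M-j) *
        poch (x-N) (j+1) * kraw N p n (x+(j+1:ℕ)) with hU
    have claim1 : (∑ j ∈ Finset.range (M + 1 + 1),
        (-1) ^ j * ((M+1).choose j : ℝ) * poch (x + 1 + j) (M + 1 - j) * poch (x - N) j *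
          kraw N p n (x + j)) =
        (∑ j ∈ Finset.range (M+1), T j) - (∑ j ∈ Finset.range (M+1), U j) := by
      rw [Finset.sum_range_succ' _ (M+1)]
      have hsplit : ∀ i ∈ Finset.range (M+1),
          (-1) ^ (i+1) * ((M+1).choose (i+1) : ℝ) * poch (x + 1 + (i+1:ℕ)) (M + 1 - (i+1)) *
            poch (x - N) (i+1) * kraw N p n (x + (i+1:ℕ)) = T (i+1) - U i := by
        intro i hi
        have : ((M+1).choose (i+1) : ℝ) = (M.choose i : ℝ) + (M.choose (i+1) : ℝ) := by
          rw [Nat.choose_succ_succ]; push_cast; ring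
        rw [this]
        simp only [hT, hU]
        rw [show M + 1 - (i+1) = M - i from by omega]
        rw [show x + 1 + ((i:ℕ)+1:ℕ) = x + 2 + i from by push_cast; ring]
        push_cast
        ring
      rw [Finset.sum_congr rfl hsplit, Finset.sum_sub_distrib]
      have hT0 : (-1:ℝ) ^ 0 * ((M+1).choose 0 : ℝ) * poch (x + 1 + (0:ℕ)) (M + 1 - 0) *
          poch (x - N) 0 * kraw N p n (x + (0:ℕ)) = T 0 := by
        simp only [hT]
        norm_num [poch_zero]
      rw [hT0]
      have hTtop : T (M+1) = 0 := by
        simp only [hT, Nat.choose_succ_self]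
        norm_num
      have h2 : (∑ i ∈ Finset.range (M+1), T (i+1)) + T 0 = ∑ j ∈ Finset.range (M+1), T j := by
        rw [← Finset.sum_range_succ' T (M+1), Finset.sum_range_succ, hTtop, add_zero]
      linarith [h2]
    have claim2 : poch ((N : ℝ) + 1) (M+1) * kraw (N + (M+1)) p n (x + (M+1:ℕ)) =
        (∑ j ∈ Finset.range (M+1), T j) - (∑ j ∈ Finset.range (M+1), U j) := by
      have e1 : poch ((N : ℝ) + 1) (M+1) = ((N:ℝ)+1) * poch ((N:ℝ)+2) M := by
        rw [poch_succ', show (N:ℝ)+1+1 = (N:ℝ)+2 from by ring]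
      have e2 : N + (M+1) = (N+1) + M := by omega
      have e3 : x + ((M:ℕ)+1:ℕ) = (x+1) + (M:ℕ) := by push_cast; ring
      rw [e1, e2, e3]
      have ihe := ih (N+1) (le_trans hn (Nat.le_succ N)) (x+1)
      push_cast at ihe
      rw [show (N:ℝ)+1+1 = (N:ℝ)+2 from by ring] at ihe
      rw [mul_assoc, ← ihe]
      rw [Finset.mul_sum, ← Finset.sum_sub_distrib]
      refine Finset.sum_congr rfl fun j hj => ?_
      have hj' : j ≤ M := Nat.lt_succ_iff.mp (Finset.mem_range.mp hj)
      have hs := step_j N n p hp0 hn (M - j) (x + j)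
      simp only [hT, hU]
      rw [show M + 1 - j = (M - j) + 1 from by omega]
      have pB : poch (x-N) (j+1) = poch (x-N) j * ((x-N)+j) := poch_succ _ _
      rw [pB]
      rw [show x + 1 + 1 + (j:ℝ) = x + (j:ℝ) + 2 from by ring,
          show x + 1 - ((N:ℝ)+1) = x - (N:ℝ) from by ring,
          show x + 1 + (j:ℝ) = x + (j:ℝ) + 1 from by ring]
      push_cast
      rw [show x + ((j:ℝ)+1) = x + (j:ℝ) + 1 from by ring,
          show x + 2 + (j:ℝ) = x + (j:ℝ) + 2 from by ring]
      linear_combination ((-1:ℝ)^j * (M.choose j : ℝ) * poch (x-N) j) * hs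
    rw [claim1, claim2]
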